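/- Let Q be a nondegenerate quadratic form on R^{b+2} of signature (b,2) with b ≥ 1, written in an orthogonal basis as Q(x_1,x_2,y_1,...,y_b) = −x_1² − x_2² + y_1² + ... + y_b², with Lebesgue measure μ normalized so that an integral lattice L of discriminant |L^∨/L| has covolume 1 (so dμ = (2^{1+b/2}/√|L^∨/L|) dx dy). Define, for a real T > 0, Ω_{≤T} = {λ : Q(λ) = 1, x_1² + x_2² ≤ T} and its measure μ_∞(Ω_{≤T}) = lim_{ε→0} (1/2ε) μ({λ : |Q(λ) − 1| < ε, x_1² + x_2² < T}). Then μ_∞(Ω_{≤T}) = (2π)^{k} ((1+T)^{b/2} − 1) / (√|L^∨/L| Γ(k)), where k = 1 + b/2. -/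

import Mathlib

open Filter Topology MeasureTheory

/-- Volume of `Ω_{≤T}` on the quadric `{Q = 1}` for `Q` of signature `(b,2)` in the diagonal
form `Q(x,y) = -x₁² - x₂² + y₁² + ⋯ + y_b²`, with Lebesgue measure normalized by the factor
`2^{1+b/2}/√D` (so that a lattice with `|L^∨/L| = D` has covolume one):
`μ_∞(Ω_{≤T}) = lim_{ε→0⁺} (1/2ε) μ{|Q-1| < ε, x₁²+x₂² < T}
            = (2π)^k ((1+T)^{b/2} - 1)/(√D Γ(k))`, where `k = 1 + b/2`. -/

lemma aux_volY (b : ℕ) (hb : 1 ≤ b) (R : ℝ) :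
    volume {y : Fin b → ℝ | ∑ i, y i ^ 2 < R}
      = ENNReal.ofReal (Real.sqrt R ^ b * (Real.sqrt Real.pi ^ b / Real.Gamma (b / 2 + 1))) := by
  have : Nonempty (Fin b) := ⟨⟨0, hb⟩⟩
  rcases le_or_gt R 0 with hR | hR
  · have he : {y : Fin b → ℝ | ∑ i, y i ^ 2 < R} = ∅ := by
      ext y
      simp only [Set.mem_setOf_eq, Set.mem_empty_iff_false, iff_false, not_lt]
      exact hR.trans (Finset.sum_nonneg fun _ _ => sq_nonneg _)
    rw [he, measure_empty, Real.sqrt_eq_zero_of_nonpos hR, zero_pow (by omega), zero_mul,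
      ENNReal.ofReal_zero]
  · have hmp := EuclideanSpace.volume_preserving_symm_measurableEquiv_toLp (Fin b)
    have hmeas : MeasurableSet {y : Fin b → ℝ | ∑ i, y i ^ 2 < R} := by
      apply measurableSet_lt (by fun_prop) measurable_const
    rw [← hmp.measure_preimage hmeas.nullMeasurableSet]
    have hpre : ((MeasurableEquiv.toLp 2 (Fin b → ℝ)).symm) ⁻¹'
        {y : Fin b → ℝ | ∑ i, y i ^ 2 < R} = Metric.ball (0 : EuclideanSpace ℝ (Fin b)) (Real.sqrt R) := by
      rw [EuclideanSpace.ball_zero_eq _ (Real.sqrt_nonneg R), Real.sq_sqrt hR.le]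
      rfl
    rw [hpre, EuclideanSpace.volume_ball, Fintype.card_fin,
      ← ENNReal.ofReal_pow (Real.sqrt_nonneg R), ← ENNReal.ofReal_mul (by positivity)]

lemma aux_volY_le (b : ℕ) (hb : 1 ≤ b) (R : ℝ) (hR : 0 ≤ R) :
    volume {y : Fin b → ℝ | ∑ i, y i ^ 2 ≤ R}
      = ENNReal.ofReal (Real.sqrt R ^ b * (Real.sqrt Real.pi ^ b / Real.Gamma (b / 2 + 1))) := by
  have : Nonempty (Fin b) := ⟨⟨0, hb⟩⟩
  have hmp := EuclideanSpace.volume_preserving_symm_measurableEquiv_toLp (Fin b)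
  have hmeas : MeasurableSet {y : Fin b → ℝ | ∑ i, y i ^ 2 ≤ R} := by
    apply measurableSet_le (by fun_prop) measurable_const
  rw [← hmp.measure_preimage hmeas.nullMeasurableSet]
  have hpre : ((MeasurableEquiv.toLp 2 (Fin b → ℝ)).symm) ⁻¹'
      {y : Fin b → ℝ | ∑ i, y i ^ 2 ≤ R} = Metric.closedBall (0 : EuclideanSpace ℝ (Fin b)) (Real.sqrt R) := by
    rw [EuclideanSpace.closedBall_zero_eq _ (Real.sqrt_nonneg R), Real.sq_sqrt hR]
    rfl
  rw [hpre, EuclideanSpace.volume_closedBall, Fintype.card_fin,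
    ← ENNReal.ofReal_pow (Real.sqrt_nonneg R), ← ENNReal.ofReal_mul (by positivity)]

lemma sqrt_pow_eq_rpow (R : ℝ) (hR : 0 ≤ R) (b : ℕ) :
    Real.sqrt R ^ b = R ^ ((b : ℝ) / 2) := by
  rw [Real.sqrt_eq_rpow, ← Real.rpow_natCast (R ^ (1/2 : ℝ)) b, ← Real.rpow_mul hR]
  ring_nf

lemma aux_annulus (b : ℕ) (hb : 1 ≤ b) (a c : ℝ) (ha : 0 ≤ a) (hac : a < c) :
    volume {y : Fin b → ℝ | a < ∑ i, y i ^ 2 ∧ ∑ i, y i ^ 2 < c}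
      = ENNReal.ofReal ((c ^ ((b : ℝ) / 2) - a ^ ((b : ℝ) / 2)) *
          (Real.sqrt Real.pi ^ b / Real.Gamma (b / 2 + 1))) := by
  have hset : {y : Fin b → ℝ | a < ∑ i, y i ^ 2 ∧ ∑ i, y i ^ 2 < c}
      = {y : Fin b → ℝ | ∑ i, y i ^ 2 < c} \ {y : Fin b → ℝ | ∑ i, y i ^ 2 ≤ a} := by
    ext y; simp only [Set.mem_setOf_eq, Set.mem_diff, not_le]; tauto
  have hsub : {y : Fin b → ℝ | ∑ i, y i ^ 2 ≤ a} ⊆ {y : Fin b → ℝ | ∑ i, y i ^ 2 < c} :=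
    fun y hy => lt_of_le_of_lt hy hac
  have hmeas : NullMeasurableSet {y : Fin b → ℝ | ∑ i, y i ^ 2 ≤ a} volume :=
    (measurableSet_le (by fun_prop) measurable_const).nullMeasurableSet
  rw [hset, measure_diff hsub hmeas (by rw [aux_volY_le b hb a ha]; exact ENNReal.ofReal_ne_top),
    aux_volY b hb, aux_volY_le b hb a ha,
    sqrt_pow_eq_rpow a ha b, sqrt_pow_eq_rpow c (ha.trans hac.le) b,
    ← ENNReal.ofReal_sub _ (by positivity), sub_mul]

lemma aux_fubini (b : ℕ) (hb : 1 ≤ b) (T : ℝ) (hT : 0 < T) (ε : ℝ) (hε : 0 < ε) (hε1 : ε < 1) :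
    volume {v : (Fin 2 → ℝ) × (Fin b → ℝ) |
        |(-(∑ i, (v.1 i) ^ 2) + ∑ i, (v.2 i) ^ 2) - 1| < ε ∧ (∑ i, (v.1 i) ^ 2) < T}
      = ∫⁻ x : Fin 2 → ℝ, Set.indicator {x : Fin 2 → ℝ | ∑ i, x i ^ 2 < T}
          (fun x => ENNReal.ofReal
            (((1 + ∑ i, x i ^ 2 + ε) ^ ((b : ℝ) / 2) - (1 + ∑ i, x i ^ 2 - ε) ^ ((b : ℝ) / 2)) *
              (Real.sqrt Real.pi ^ b / Real.Gamma (b / 2 + 1)))) x := by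
  have hcont1 : Continuous fun v : (Fin 2 → ℝ) × (Fin b → ℝ) =>
      |(-(∑ i, (v.1 i) ^ 2) + ∑ i, (v.2 i) ^ 2) - 1| := by fun_prop
  have hcont2 : Continuous fun v : (Fin 2 → ℝ) × (Fin b → ℝ) => ∑ i, (v.1 i) ^ 2 := by fun_prop
  have hS : MeasurableSet {v : (Fin 2 → ℝ) × (Fin b → ℝ) |
      |(-(∑ i, (v.1 i) ^ 2) + ∑ i, (v.2 i) ^ 2) - 1| < ε ∧ (∑ i, (v.1 i) ^ 2) < T} := by
    exact ((isOpen_lt hcont1 continuous_const).inter (isOpen_lt hcont2 continuous_const)).measurableSet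
  rw [MeasureTheory.Measure.volume_eq_prod, Measure.prod_apply hS]
  refine lintegral_congr fun x => ?_
  by_cases hx : (∑ i, x i ^ 2) < T
  · rw [Set.indicator_of_mem (show x ∈ {x : Fin 2 → ℝ | ∑ i, x i ^ 2 < T} from hx)]
    have hpre : Prod.mk x ⁻¹' {v : (Fin 2 → ℝ) × (Fin b → ℝ) |
        |(-(∑ i, (v.1 i) ^ 2) + ∑ i, (v.2 i) ^ 2) - 1| < ε ∧ (∑ i, (v.1 i) ^ 2) < T}
        = {y : Fin b → ℝ | 1 + ∑ i, x i ^ 2 - ε < ∑ i, y i ^ 2 ∧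
            ∑ i, y i ^ 2 < 1 + ∑ i, x i ^ 2 + ε} := by
      ext y
      simp only [Set.mem_preimage, Set.mem_setOf_eq, hx, and_true, abs_sub_lt_iff]
      constructor
      · rintro ⟨h1, h2⟩; constructor <;> linarith
      · rintro ⟨h1, h2⟩; constructor <;> linarith
    have hx0 : (0:ℝ) ≤ ∑ i, x i ^ 2 := Finset.sum_nonneg fun i _ => sq_nonneg (x i)
    rw [hpre, aux_annulus b hb _ _ (by linarith) (by linarith)]
  · rw [Set.indicator_of_notMem (show x ∉ {x : Fin 2 → ℝ | ∑ i, x i ^ 2 < T} from hx)]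
    have hpre : Prod.mk x ⁻¹' {v : (Fin 2 → ℝ) × (Fin b → ℝ) |
        |(-(∑ i, (v.1 i) ^ 2) + ∑ i, (v.2 i) ^ 2) - 1| < ε ∧ (∑ i, (v.1 i) ^ 2) < T} = ∅ := by
      ext y; simp only [Set.mem_preimage, Set.mem_setOf_eq, Set.mem_empty_iff_false, iff_false]
      rintro ⟨-, h2⟩; exact hx h2
    rw [hpre, measure_empty]

lemma aux_radial (b : ℕ) (hb : 1 ≤ b) (T : ℝ) (hT : 0 < T) (ε : ℝ) (hε : 0 < ε) (hε1 : ε < 1) :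
    ∫⁻ x : Fin 2 → ℝ, Set.indicator {x : Fin 2 → ℝ | ∑ i, x i ^ 2 < T}
        (fun x => ENNReal.ofReal
          (((1 + ∑ i, x i ^ 2 + ε) ^ ((b : ℝ) / 2) - (1 + ∑ i, x i ^ 2 - ε) ^ ((b : ℝ) / 2)) *
            (Real.sqrt Real.pi ^ b / Real.Gamma (b / 2 + 1)))) x
      = ENNReal.ofReal (2 * Real.pi * ∫ y in Set.Ioi (0:ℝ),
          y * Set.indicator (Set.Iio (Real.sqrt T))
            (fun t => ((1 + t ^ 2 + ε) ^ ((b : ℝ) / 2) - (1 + t ^ 2 - ε) ^ ((b : ℝ) / 2)) *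
              (Real.sqrt Real.pi ^ b / Real.Gamma (b / 2 + 1))) y) := by
  set cb := Real.sqrt Real.pi ^ b / Real.Gamma (b / 2 + 1) with hcb
  have hcb0 : 0 ≤ cb := by positivity
  set h : ℝ → ℝ := fun u => ((1 + u + ε) ^ ((b : ℝ) / 2) - (1 + u - ε) ^ ((b : ℝ) / 2)) * cb
    with hh
  have hhcont : Continuous h := by
    apply Continuous.mul _ continuous_const
    exact ((continuous_const.add continuous_id).add continuous_const).rpow_const
        (fun _ => Or.inr (by positivity)) |>.sub
      (((continuous_const.add continuous_id).sub continuous_const).rpow_const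
        (fun _ => Or.inr (by positivity)))
  set f₀ : ℝ → ℝ := Set.indicator (Set.Iio (Real.sqrt T)) (fun t => h (t ^ 2)) with hf₀
  -- transfer to euclidean space
  have hmp := EuclideanSpace.volume_preserving_symm_measurableEquiv_toLp (Fin 2)
  have hGmeas : Measurable (fun x : Fin 2 → ℝ => Set.indicator {x : Fin 2 → ℝ | ∑ i, x i ^ 2 < T}
      (fun x => ENNReal.ofReal (h (∑ i, x i ^ 2))) x) := by
    apply Measurable.indicator
    · exact (ENNReal.measurable_ofReal.comp (hhcont.measurable.comp (by fun_prop)))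
    · exact measurableSet_lt (by fun_prop) measurable_const
  rw [← hmp.lintegral_comp hGmeas]
  have key : ∀ z : EuclideanSpace ℝ (Fin 2),
      Set.indicator {x : Fin 2 → ℝ | ∑ i, x i ^ 2 < T}
        (fun x => ENNReal.ofReal (h (∑ i, x i ^ 2)))
        ((MeasurableEquiv.toLp 2 (Fin 2 → ℝ)).symm z)
      = ENNReal.ofReal (f₀ ‖z‖) := by
    intro z
    have hze : ∀ i, ((MeasurableEquiv.toLp 2 (Fin 2 → ℝ)).symm z) i = z i := fun i => rfl
    have hzsum : ∑ i, ((MeasurableEquiv.toLp 2 (Fin 2 → ℝ)).symm z) i ^ 2 = ‖z‖ ^ 2 := by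
      simp_rw [hze, EuclideanSpace.norm_eq]
      rw [Real.sq_sqrt (Finset.sum_nonneg fun i _ => sq_nonneg _)]
      simp [sq_abs]
    have hiff : (∑ i, ((MeasurableEquiv.toLp 2 (Fin 2 → ℝ)).symm z) i ^ 2 < T) ↔ ‖z‖ < Real.sqrt T := by
      rw [hzsum, Real.lt_sqrt (norm_nonneg z)]
    by_cases hz : ‖z‖ < Real.sqrt T
    · rw [Set.indicator_of_mem (show _ ∈ {x : Fin 2 → ℝ | ∑ i, x i ^ 2 < T} from hiff.mpr hz),
        hzsum, hf₀, Set.indicator_of_mem (Set.mem_Iio.mpr hz)]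
    · rw [Set.indicator_of_notMem (show _ ∉ {x : Fin 2 → ℝ | ∑ i, x i ^ 2 < T} from
          fun hm => hz (hiff.mp hm)), hf₀, Set.indicator_of_notMem (fun hm => hz (Set.mem_Iio.mp hm)), ENNReal.ofReal_zero]
  simp_rw [key]
  -- convert to Bochner integral
  have hf₀nn : ∀ y, 0 ≤ f₀ y := by
    intro y
    apply Set.indicator_nonneg
    intro t _
    apply mul_nonneg _ hcb0
    have h1 : (0:ℝ) ≤ 1 + t ^ 2 - ε := by nlinarith [sq_nonneg t]
    exact sub_nonneg.mpr (Real.rpow_le_rpow h1 (by linarith) (by positivity))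
  have hFint : Integrable (fun z : EuclideanSpace ℝ (Fin 2) => f₀ ‖z‖) := by
    have hFeq : (fun z : EuclideanSpace ℝ (Fin 2) => f₀ ‖z‖)
        = Set.indicator (Metric.ball (0 : EuclideanSpace ℝ (Fin 2)) (Real.sqrt T))
            (fun z => h (‖z‖ ^ 2)) := by
      funext z
      by_cases hz : ‖z‖ < Real.sqrt T
      · rw [hf₀, Set.indicator_of_mem (Set.mem_Iio.mpr hz), Set.indicator_of_mem (mem_ball_zero_iff.mpr hz)]
      · rw [hf₀, Set.indicator_of_notMem (fun hm => hz (Set.mem_Iio.mp hm)),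
          Set.indicator_of_notMem (fun hm => hz (mem_ball_zero_iff.mp hm))]
    rw [hFeq, integrable_indicator_iff measurableSet_ball]
    refine IntegrableOn.mono_set ?_ Metric.ball_subset_closedBall
    exact (hhcont.comp ((continuous_norm).pow 2)).continuousOn.integrableOn_compact
      (isCompact_closedBall _ _)
  rw [← ofReal_integral_eq_lintegral_ofReal hFint (Filter.Eventually.of_forall fun z => hf₀nn _)]
  congr 1
  rw [integral_fun_norm_addHaar (volume : Measure (EuclideanSpace ℝ (Fin 2))) f₀]
  have hdim : Module.finrank ℝ (EuclideanSpace ℝ (Fin 2)) = 2 := by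
    simp [finrank_euclideanSpace]
  rw [hdim]
  have hball : ((volume : Measure (EuclideanSpace ℝ (Fin 2))) (Metric.ball 0 1)).toReal
      = Real.pi := by
    rw [EuclideanSpace.volume_ball]
    simp only [Fintype.card_fin, ENNReal.ofReal_one, one_pow, one_mul]
    rw [ENNReal.toReal_ofReal (by positivity)]
    norm_num [Real.sq_sqrt Real.pi_pos.le, Real.Gamma_two]
  rw [measureReal_def, hball]
  rw [nsmul_eq_mul, smul_eq_mul]
  rw [← mul_assoc]
  congr 1
  exact setIntegral_congr_fun measurableSet_Ioi fun y hy => by simp [smul_eq_mul]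

lemma aux_eval (b : ℕ) (hb : 1 ≤ b) (T : ℝ) (hT : 0 < T) (ε : ℝ) (hε : 0 < ε) (hε1 : ε < 1) :
    ∫ y in Set.Ioi (0:ℝ),
        y * Set.indicator (Set.Iio (Real.sqrt T))
          (fun t => ((1 + t ^ 2 + ε) ^ ((b : ℝ) / 2) - (1 + t ^ 2 - ε) ^ ((b : ℝ) / 2)) *
            (Real.sqrt Real.pi ^ b / Real.Gamma (b / 2 + 1))) y
      = (Real.sqrt Real.pi ^ b / Real.Gamma (b / 2 + 1)) / (2 * (1 + (b : ℝ) / 2)) *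
          ((1 + T + ε) ^ (1 + (b : ℝ) / 2) - (1 + T - ε) ^ (1 + (b : ℝ) / 2)
            - ((1 + ε) ^ (1 + (b : ℝ) / 2) - (1 - ε) ^ (1 + (b : ℝ) / 2))) := by
  set cb := Real.sqrt Real.pi ^ b / Real.Gamma (b / 2 + 1) with hcb
  set k : ℝ := 1 + (b : ℝ) / 2 with hk
  have hk1 : (1:ℝ) ≤ k := by
    have : (0:ℝ) ≤ (b : ℝ) / 2 := by positivity
    rw [hk]; linarith
  have hk0 : k ≠ 0 := (zero_lt_one.trans_le hk1).ne'
  set q : ℝ → ℝ := fun y =>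
    y * (((1 + y ^ 2 + ε) ^ ((b : ℝ) / 2) - (1 + y ^ 2 - ε) ^ ((b : ℝ) / 2)) * cb) with hq
  have step1 : ∀ y : ℝ, y * Set.indicator (Set.Iio (Real.sqrt T))
      (fun t => ((1 + t ^ 2 + ε) ^ ((b : ℝ) / 2) - (1 + t ^ 2 - ε) ^ ((b : ℝ) / 2)) * cb) y
      = Set.indicator (Set.Iio (Real.sqrt T)) q y := by
    intro y
    by_cases hy : y ∈ Set.Iio (Real.sqrt T)
    · rw [Set.indicator_of_mem hy, Set.indicator_of_mem hy]
    · rw [Set.indicator_of_notMem hy, Set.indicator_of_notMem hy, mul_zero]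
  simp_rw [step1]
  rw [setIntegral_indicator measurableSet_Iio, Set.Ioi_inter_Iio,
    ← MeasureTheory.integral_Ioc_eq_integral_Ioo,
    ← intervalIntegral.integral_of_le (Real.sqrt_nonneg T)]
  set Q : ℝ → ℝ := fun y => cb / (2 * k) * ((1 + y ^ 2 + ε) ^ k - (1 + y ^ 2 - ε) ^ k) with hQ
  have hderiv : ∀ y : ℝ, HasDerivAt Q (q y) y := by
    intro y
    have hin : HasDerivAt (fun y : ℝ => 1 + y ^ 2 + ε) (2 * y) y := by
      simpa using ((hasDerivAt_pow 2 y).const_add 1).add_const ε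
    have hin2 : HasDerivAt (fun y : ℝ => 1 + y ^ 2 - ε) (2 * y) y := by
      simpa using ((hasDerivAt_pow 2 y).const_add 1).sub_const ε
    have h1 : HasDerivAt (fun y : ℝ => (1 + y ^ 2 + ε) ^ k)
        (k * (1 + y ^ 2 + ε) ^ (k - 1) * (2 * y)) y :=
      (Real.hasDerivAt_rpow_const (Or.inr hk1)).comp y hin
    have h2 : HasDerivAt (fun y : ℝ => (1 + y ^ 2 - ε) ^ k)
        (k * (1 + y ^ 2 - ε) ^ (k - 1) * (2 * y)) y :=
      (Real.hasDerivAt_rpow_const (Or.inr hk1)).comp y hin2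
    have hkb : k - 1 = (b : ℝ) / 2 := by rw [hk]; ring
    rw [hkb] at h1 h2
    have := (h1.sub h2).const_mul (cb / (2 * k))
    refine this.congr_deriv ?_
    rw [hq]
    field_simp
  have hqcont : Continuous q := by
    apply continuous_id.mul
    apply Continuous.mul _ continuous_const
    exact ((continuous_const.add (continuous_pow 2)).add continuous_const).rpow_const
        (fun _ => Or.inr (by positivity)) |>.sub
      (((continuous_const.add (continuous_pow 2)).sub continuous_const).rpow_const
        (fun _ => Or.inr (by positivity)))
  rw [intervalIntegral.integral_eq_sub_of_hasDerivAt (fun y _ => hderiv y)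
    (hqcont.intervalIntegrable _ _)]
  rw [hQ]
  simp only [Real.sq_sqrt hT.le]
  norm_num
  ring

theorem stmt_4 (b : ℕ) (hb : 1 ≤ b) (D : ℝ) (hD : 0 < D) (T : ℝ) (hT : 0 < T) :
    Tendsto (fun ε : ℝ =>
      (2 : ℝ) ^ (1 + (b : ℝ) / 2) / Real.sqrt D *
        (volume {v : (Fin 2 → ℝ) × (Fin b → ℝ) |
          |(-(∑ i, (v.1 i) ^ 2) + ∑ i, (v.2 i) ^ 2) - 1| < ε ∧
            (∑ i, (v.1 i) ^ 2) < T}).toReal / (2 * ε))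
      (nhdsWithin 0 (Set.Ioi 0))
      (nhds ((2 * Real.pi) ^ (1 + (b : ℝ) / 2) * ((1 + T) ^ ((b : ℝ) / 2) - 1) /
        (Real.sqrt D * Real.Gamma (1 + (b : ℝ) / 2)))) := by
  set k : ℝ := 1 + (b : ℝ) / 2 with hk
  have hb2 : (0:ℝ) ≤ (b : ℝ) / 2 := by positivity
  have hk1 : (1:ℝ) ≤ k := by rw [hk]; linarith
  have hkpos : (0:ℝ) < k := lt_of_lt_of_le one_pos hk1
  set cb : ℝ := Real.sqrt Real.pi ^ b / Real.Gamma (b / 2 + 1) with hcb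
  have hΓpos : 0 < Real.Gamma ((b:ℝ) / 2 + 1) := Real.Gamma_pos_of_pos (by positivity)
  have hcbpos : 0 < cb := by
    rw [hcb]; apply div_pos _ hΓpos; positivity
  set Ψ : ℝ → ℝ := fun ε => (1 + T + ε) ^ k - (1 + T - ε) ^ k - ((1 + ε) ^ k - (1 - ε) ^ k)
    with hΨ
  set Cst : ℝ := (2:ℝ) ^ k * Real.pi * cb / (2 * Real.sqrt D * k) with hCst
  set d : ℝ := 2 * k * ((1 + T) ^ ((b:ℝ)/2) - 1) with hd
  -- derivative of Ψ at 0
  have hΨderiv : HasDerivAt Ψ d 0 := by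
    have hbase : ∀ c : ℝ, HasDerivAt (fun ε : ℝ => (c + ε) ^ k) (k * c ^ (k - 1)) 0 := by
      intro c
      have hin : HasDerivAt (fun ε : ℝ => c + ε) 1 0 := by
        simpa using (hasDerivAt_id (0:ℝ)).const_add c
      have := (Real.hasDerivAt_rpow_const (p := k) (Or.inr hk1)).comp 0 hin
      simpa [Function.comp_def] using this
    have hbase' : ∀ c : ℝ, HasDerivAt (fun ε : ℝ => (c - ε) ^ k) (-(k * c ^ (k - 1))) 0 := by
      intro c
      have hin : HasDerivAt (fun ε : ℝ => c - ε) (-1) 0 := by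
        exact (hasDerivAt_id (0:ℝ)).const_sub c
      have := (Real.hasDerivAt_rpow_const (p := k) (Or.inr hk1)).comp 0 hin
      simpa [mul_comm, Function.comp_def] using this
    have h1 := hbase (1 + T)
    have h2 := hbase' (1 + T)
    have h3 := hbase 1
    have h4 := hbase' 1
    have := ((h1.sub h2).sub (h3.sub h4))
    have hkb : k - 1 = (b : ℝ) / 2 := by rw [hk]; ring
    rw [hkb] at this
    refine this.congr_deriv ?_
    rw [hd, Real.one_rpow]
    ring
  have hΨ0 : Ψ 0 = 0 := by rw [hΨ]; norm_num
  -- slope limit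
  have hslope : Tendsto (fun ε => Ψ ε / ε) (nhdsWithin 0 (Set.Ioi 0)) (nhds d) := by
    have h := hasDerivAt_iff_tendsto_slope.mp hΨderiv
    have h' : Tendsto (slope Ψ 0) (nhdsWithin 0 (Set.Ioi 0)) (nhds d) :=
      h.mono_left (nhdsWithin_mono 0 (fun x hx => ne_of_gt hx))
    refine h'.congr fun ε => ?_
    rw [slope_def_field, hΨ0, sub_zero, sub_zero]
  -- main tendsto
  have hmain : Tendsto (fun ε => Cst * (Ψ ε / ε)) (nhdsWithin 0 (Set.Ioi 0))
      (nhds (Cst * d)) := hslope.const_mul Cst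
  have hval : Cst * d = (2 * Real.pi) ^ k * ((1 + T) ^ ((b : ℝ) / 2) - 1) /
      (Real.sqrt D * Real.Gamma k) := by
    have hΓ : Real.Gamma ((b:ℝ) / 2 + 1) = Real.Gamma k := by rw [hk, add_comm]
    have hπ : Real.sqrt Real.pi ^ b = Real.pi ^ ((b:ℝ)/2) := by
      rw [Real.sqrt_eq_rpow, ← Real.rpow_natCast (Real.pi ^ (1/2 : ℝ)) b,
        ← Real.rpow_mul Real.pi_pos.le]
      ring_nf
    have h2π : (2 * Real.pi) ^ k = 2 ^ k * Real.pi ^ k :=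
      Real.mul_rpow (by norm_num) Real.pi_pos.le
    have hπk : Real.pi ^ k = Real.pi * Real.pi ^ ((b:ℝ)/2) := by
      rw [hk, Real.rpow_add Real.pi_pos, Real.rpow_one]
    have hsD : Real.sqrt D ≠ 0 := (Real.sqrt_pos.mpr hD).ne'
    rw [hCst, hd, hcb, hΓ, hπ, h2π, hπk]
    field_simp
  rw [← hval]
  refine hmain.congr' ?_
  have hmem : Set.Ioo (0:ℝ) 1 ∈ nhdsWithin 0 (Set.Ioi 0) :=
    Ioo_mem_nhdsGT_of_mem ⟨le_refl 0, one_pos⟩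
  filter_upwards [hmem] with ε hε
  have hε0 : 0 < ε := hε.1
  have hε1 : ε < 1 := hε.2
  -- nonnegativity of the radial integral
  have hJnn : 0 ≤ ∫ y in Set.Ioi (0:ℝ),
      y * Set.indicator (Set.Iio (Real.sqrt T))
        (fun t => ((1 + t ^ 2 + ε) ^ ((b : ℝ) / 2) - (1 + t ^ 2 - ε) ^ ((b : ℝ) / 2)) *
          (Real.sqrt Real.pi ^ b / Real.Gamma (b / 2 + 1))) y := by
    apply setIntegral_nonneg measurableSet_Ioi
    intro y hy
    apply mul_nonneg (le_of_lt hy)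
    apply Set.indicator_nonneg
    intro t _
    apply mul_nonneg _ (le_of_lt hcbpos)
    have h1 : (0:ℝ) ≤ 1 + t ^ 2 - ε := by nlinarith [sq_nonneg t]
    exact sub_nonneg.mpr (Real.rpow_le_rpow h1 (by linarith) hb2)
  rw [aux_fubini b hb T hT ε hε0 hε1, aux_radial b hb T hT ε hε0 hε1,
    ENNReal.toReal_ofReal (mul_nonneg (by positivity) hJnn), aux_eval b hb T hT ε hε0 hε1]
  rw [← hcb, ← hk]
  have hfold : (1 + T + ε) ^ k - (1 + T - ε) ^ k - ((1 + ε) ^ k - (1 - ε) ^ k) = Ψ ε := rfl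
  rw [hfold, hCst]
  have hsD : Real.sqrt D ≠ 0 := (Real.sqrt_pos.mpr hD).ne'
  field_simp
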